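/- Let r ≥ 1, let a_0,…,a_{r−1} be nonzero complex numbers, let n = (n_0,…,n_{r−1}) ∈ ℕ^r, and fix x ∈ ℂ. For real β with β > 0 and a_ℓ + β ≠ 0 for all ℓ, set c_ℓ(β) = a_ℓ/(a_ℓ+β). Then, as β → +∞ along the reals, M^{β, c(β)}_n(x) converges to C^a_n(x); that is, lim_{β→∞} Σ_{k_0=0}^{n_0}⋯Σ_{k_{r−1}=0}^{n_{r−1}} (Π_ℓ binom(n_ℓ,k_ℓ)·c_ℓ(β)^{n_ℓ−k_ℓ}/(c_ℓ(β)−1)^{n_ℓ})·(−x)_{|k|}·(x+β)_{|n|−|k|} = Σ_{k_0=0}^{n_0}⋯Σ_{k_{r−1}=0}^{n_{r−1}} (Π_ℓ binom(n_ℓ,k_ℓ)·(−a_ℓ)^{n_ℓ−k_ℓ})·(−1)^{|k|}·(−x)_{|k|}. -/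

import Mathlib

/-- The rising Pochhammer symbol `(y)_m = y(y+1)⋯(y+m-1)`. -/
noncomputable def poch (y : ℂ) (m : ℕ) : ℂ := ∏ i ∈ Finset.range m, (y + i)

/-- The explicit type II Charlier--Angelesco polynomial (as a function of `x = z^r`). -/
noncomputable def charlierAngelesco (r : ℕ) (a : Fin r → ℂ) (n : Fin r → ℕ) (x : ℂ) : ℂ :=
  ∑ k ∈ Fintype.piFinset (fun i : Fin r => Finset.range (n i + 1)),
    (∏ ℓ : Fin r, ((n ℓ).choose (k ℓ) : ℂ) * (-(a ℓ)) ^ (n ℓ - k ℓ)) *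
      (-1) ^ (∑ i, k i) * poch (-x) (∑ i, k i)

/-- The explicit type II Meixner--Angelesco polynomial of the first kind
(as a function of `x = z^r`). -/
noncomputable def meixnerAngelesco (r : ℕ) (β : ℂ) (c : Fin r → ℂ) (n : Fin r → ℕ)
    (x : ℂ) : ℂ :=
  ∑ k ∈ Fintype.piFinset (fun i : Fin r => Finset.range (n i + 1)),
    (∏ ℓ : Fin r, ((n ℓ).choose (k ℓ) : ℂ) * (c ℓ) ^ (n ℓ - k ℓ) / (c ℓ - 1) ^ (n ℓ)) *
      poch (-x) (∑ i, k i) * poch (x + β) ((∑ i, n i) - ∑ i, k i)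

open Filter Finset

private lemma aux_frac (A B : ℂ) (d k : ℕ) (C : ℂ) (hB : B ≠ 0) (hAB : A + B ≠ 0) :
    C * (A / (A + B)) ^ d / ((A / (A + B) - 1) ^ (d + k))
      = C * (-A) ^ d * (-1 : ℂ) ^ k * ((A + B) / B) ^ k * (B⁻¹) ^ d := by
  have hc1 : A / (A + B) - 1 = -B / (A + B) := by field_simp; ring
  rw [hc1, div_pow, div_pow, div_pow, inv_pow, pow_add, neg_pow B]
  field_simp
  rw [div_eq_iff (pow_ne_zero _ (neg_ne_zero.mpr hB)), neg_pow A, neg_pow B]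
  have h1 : ∀ m : ℕ, ((-1 : ℂ)) ^ m * (-1) ^ m = 1 := by
    intro m; rw [← mul_pow]; norm_num
  linear_combination (-(C * A ^ d * (A + B) ^ (d + k) * B ^ k)) * h1 d
    + (-(C * A ^ d * (A + B) ^ (d + k) * B ^ k) * ((-1 : ℂ) ^ d * (-1) ^ d)) * h1 k

private lemma tendsto_ratio (c : ℂ) :
    Tendsto (fun β : ℝ => (c + (β : ℂ)) / (β : ℂ)) atTop (nhds 1) := by
  have h0 : Tendsto (fun β : ℝ => ((β : ℂ))⁻¹) atTop (nhds 0) := by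
    have := (Complex.continuous_ofReal.tendsto 0).comp tendsto_inv_atTop_zero
    simpa [Function.comp_def, ← Complex.ofReal_inv] using this
  have h1 : Tendsto (fun β : ℝ => c * ((β : ℂ))⁻¹ + 1) atTop (nhds 1) := by
    have := (h0.const_mul c).add_const 1
    simpa using this
  refine h1.congr' ?_
  filter_upwards [eventually_gt_atTop (0 : ℝ)] with β hβ
  have hβ' : (β : ℂ) ≠ 0 := Complex.ofReal_ne_zero.2 (ne_of_gt hβ)
  field_simp

/-- Limit relation from Meixner--Angelesco to Charlier--Angelesco
polynomials: with `c_ℓ(β) = a_ℓ/(a_ℓ+β)`, as `β → +∞` along the reals,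
`M^{β,c(β)}_n(x) → C^a_n(x)`. -/
theorem meixner_to_charlier_limit (r : ℕ) (hr : 1 ≤ r) (a : Fin r → ℂ)
    (ha : ∀ ℓ, a ℓ ≠ 0) (n : Fin r → ℕ) (x : ℂ) :
    Filter.Tendsto
      (fun β : ℝ =>
        meixnerAngelesco r (β : ℂ) (fun ℓ => a ℓ / (a ℓ + (β : ℂ))) n x)
      Filter.atTop (nhds (charlierAngelesco r a n x)) := by
  unfold meixnerAngelesco charlierAngelesco
  refine tendsto_finset_sum _ (fun k hk => ?_)
  have hkn : ∀ ℓ, k ℓ ≤ n ℓ := by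
    intro ℓ
    have := Fintype.mem_piFinset.1 hk ℓ
    simpa [Nat.lt_succ_iff] using this
  set K := ∑ i, k i with hKdef
  set N := ∑ i, n i with hNdef
  have hsumd : ∑ ℓ, (n ℓ - k ℓ) = N - K := by
    have h1 : ∑ ℓ, ((n ℓ - k ℓ) + k ℓ) = ∑ ℓ, n ℓ :=
      Finset.sum_congr rfl fun ℓ _ => by have := hkn ℓ; omega
    rw [Finset.sum_add_distrib] at h1
    omega
  set T : ℂ := (∏ ℓ, ((n ℓ).choose (k ℓ) : ℂ) * (-(a ℓ)) ^ (n ℓ - k ℓ)) * (-1) ^ K *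
      poch (-x) K with hTdef
  have hg : Tendsto (fun β : ℝ =>
      (∏ ℓ, ((a ℓ + (β : ℂ)) / (β : ℂ)) ^ (k ℓ)) *
        ∏ i ∈ range (N - K), ((x + (β : ℂ) + i) / (β : ℂ))) atTop (nhds 1) := by
    have h1 : Tendsto (fun β : ℝ => ∏ ℓ, ((a ℓ + (β : ℂ)) / (β : ℂ)) ^ (k ℓ)) atTop
        (nhds (∏ ℓ : Fin r, (1 : ℂ) ^ (k ℓ))) :=
      tendsto_finset_prod _ (fun ℓ _ => (tendsto_ratio (a ℓ)).pow (k ℓ))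
    have h2 : Tendsto (fun β : ℝ => ∏ i ∈ range (N - K), ((x + (β : ℂ) + i) / (β : ℂ)))
        atTop (nhds (∏ _i ∈ range (N - K), (1 : ℂ))) :=
      tendsto_finset_prod _ (fun i _ =>
        (tendsto_ratio (x + (i : ℂ))).congr fun β => by ring_nf)
    simpa using h1.mul h2
  have hTg : Tendsto (fun β : ℝ => T *
      ((∏ ℓ, ((a ℓ + (β : ℂ)) / (β : ℂ)) ^ (k ℓ)) *
        ∏ i ∈ range (N - K), ((x + (β : ℂ) + i) / (β : ℂ)))) atTop (nhds T) := by
    simpa using hg.const_mul T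
  refine Tendsto.congr' ?_ hTg
  have hall : ∀ᶠ β : ℝ in atTop, ∀ ℓ, ‖a ℓ‖ < β :=
    eventually_all.2 fun ℓ => eventually_gt_atTop _
  filter_upwards [eventually_gt_atTop (0 : ℝ), hall] with β hβ hβa
  have hβ0 : (β : ℂ) ≠ 0 := Complex.ofReal_ne_zero.2 (ne_of_gt hβ)
  have haβ : ∀ ℓ, a ℓ + (β : ℂ) ≠ 0 := by
    intro ℓ h
    have he : a ℓ = -(β : ℂ) := by linear_combination h
    have := hβa ℓ
    rw [he] at this
    simp [abs_of_pos hβ] at this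
  have hfac : ∀ ℓ : Fin r,
      ((n ℓ).choose (k ℓ) : ℂ) * (a ℓ / (a ℓ + (β : ℂ))) ^ (n ℓ - k ℓ) /
          ((a ℓ / (a ℓ + (β : ℂ))) - 1) ^ (n ℓ)
        = (((n ℓ).choose (k ℓ) : ℂ) * (-(a ℓ)) ^ (n ℓ - k ℓ)) * ((-1 : ℂ)) ^ (k ℓ) *
            ((a ℓ + (β : ℂ)) / (β : ℂ)) ^ (k ℓ) * (((β : ℂ))⁻¹) ^ (n ℓ - k ℓ) := by
    intro ℓ
    obtain ⟨d, hd⟩ : ∃ d, n ℓ = d + k ℓ := ⟨n ℓ - k ℓ, by have := hkn ℓ; omega⟩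
    rw [hd]
    simp only [Nat.add_sub_cancel]
    exact aux_frac (a ℓ) (β : ℂ) d (k ℓ) _ hβ0 (haβ ℓ)
  have hprod :
      (∏ ℓ, ((n ℓ).choose (k ℓ) : ℂ) * (a ℓ / (a ℓ + (β : ℂ))) ^ (n ℓ - k ℓ) /
          ((a ℓ / (a ℓ + (β : ℂ))) - 1) ^ (n ℓ))
        = (∏ ℓ, ((n ℓ).choose (k ℓ) : ℂ) * (-(a ℓ)) ^ (n ℓ - k ℓ)) * (-1 : ℂ) ^ K *
            (∏ ℓ, ((a ℓ + (β : ℂ)) / (β : ℂ)) ^ (k ℓ)) * (((β : ℂ))⁻¹) ^ (N - K) := by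
    rw [Finset.prod_congr rfl (fun ℓ _ => hfac ℓ), Finset.prod_mul_distrib,
      Finset.prod_mul_distrib, Finset.prod_mul_distrib, Finset.prod_pow_eq_pow_sum,
      Finset.prod_pow_eq_pow_sum, hsumd]
  have hpoch2 : ∏ i ∈ range (N - K), ((x + (β : ℂ) + i) / (β : ℂ))
      = poch (x + (β : ℂ)) (N - K) * (((β : ℂ))⁻¹) ^ (N - K) := by
    rw [Finset.prod_div_distrib, Finset.prod_const, poch, Finset.card_range,
      div_eq_mul_inv, inv_pow]
  rw [hprod, hpoch2, hTdef]
  ring
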